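/- Let T : ℝ³ → ℝ³ be defined by T₁(x) = h((x₂ ∧ x₃) − x₁) + x₁, T₂(x) = −h(x₁ − x₃) + x₁, T₃(x) = x₃, where h(z) = sup_{0<p≤1}(log p + pz) and ∧ denotes minimum. Then T is a Shapley operator (monotone and additively homogeneous), its recession operator 𝑇̂(x) = lim_{α→+∞} T(αx)/α exists and is given by 𝑇̂₁(x) = x₁ ∨ (x₂ ∧ x₃), 𝑇̂₂(x) = x₁ ∧ x₃, 𝑇̂₃(x) = x₃, and every vector of the form (α, 0, 0) with α ≥ 0 is a fixed point of 𝑇̂. -/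

import Mathlib

noncomputable def hfun (z : ℝ) : ℝ :=
  ⨆ p : Set.Ioc (0 : ℝ) 1, (Real.log p + (p : ℝ) * z)

noncomputable def TShapley : (Fin 3 → ℝ) → (Fin 3 → ℝ) := fun x =>
  ![hfun (min (x 1) (x 2) - x 0) + x 0, -hfun (x 0 - x 2) + x 0, x 2]

noncomputable def Trec : (Fin 3 → ℝ) → (Fin 3 → ℝ) := fun x =>
  ![max (x 0) (min (x 1) (x 2)), min (x 0) (x 2), x 2]

open Real Filter

instance : Nonempty (Set.Ioc (0:ℝ) 1) := ⟨⟨1, by norm_num⟩⟩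

noncomputable def hcl (z : ℝ) : ℝ := if -1 ≤ z then z else -1 - Real.log (-z)

lemma term_le_hcl (z : ℝ) (p : Set.Ioc (0:ℝ) 1) :
    Real.log p + (p : ℝ) * z ≤ hcl z := by
  obtain ⟨p, hp0, hp1⟩ := p
  simp only [hcl]
  split_ifs with h
  · have h1 : Real.log p ≤ p - 1 := Real.log_le_sub_one_of_pos hp0
    nlinarith
  · push_neg at h
    have hz : 0 < -z := by linarith
    have h1 : Real.log (p * (-z)) ≤ p * (-z) - 1 :=
      Real.log_le_sub_one_of_pos (mul_pos hp0 hz)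
    rw [Real.log_mul (ne_of_gt hp0) (ne_of_gt hz)] at h1
    nlinarith

lemma hfun_bdd (z : ℝ) :
    BddAbove (Set.range fun p : Set.Ioc (0:ℝ) 1 => Real.log p + (p : ℝ) * z) :=
  ⟨hcl z, by rintro _ ⟨p, rfl⟩; exact term_le_hcl z p⟩

lemma hfun_eq (z : ℝ) : hfun z = hcl z := by
  apply le_antisymm
  · exact ciSup_le (term_le_hcl z)
  · by_cases h : -1 ≤ z
    · have h2 := le_ciSup (hfun_bdd z) ⟨1, by norm_num⟩
      simp only [Real.log_one, one_mul, zero_add] at h2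
      simpa [hcl, h, hfun] using h2
    · push_neg at h
      have hz : 0 < -z := by linarith
      have hmem : (-z)⁻¹ ∈ Set.Ioc (0:ℝ) 1 := by
        constructor
        · positivity
        · rw [inv_le_one_iff₀]; right; linarith
      have h2 := le_ciSup (hfun_bdd z) ⟨(-z)⁻¹, hmem⟩
      have hv : Real.log ((-z)⁻¹) + ((-z)⁻¹) * z = -1 - Real.log (-z) := by
        rw [Real.log_inv]
        have : ((-z)⁻¹) * z = -1 := by field_simp; rw [div_self (by linarith : z ≠ 0)]
        rw [this]; ring
      rw [hv] at h2
      simpa [hcl, not_le.mpr h, hfun] using h2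

lemma hfun_mono : Monotone hfun := by
  intro a b hab
  apply ciSup_le
  intro p
  calc Real.log p + (p:ℝ) * a ≤ Real.log p + (p:ℝ) * b := by
        have := p.2.1; nlinarith
    _ ≤ hfun b := le_ciSup (hfun_bdd b) p

lemma hfun_lip (z t : ℝ) (ht : 0 ≤ t) : hfun (z + t) ≤ hfun z + t := by
  apply ciSup_le
  intro p
  have h1 : Real.log p + (p:ℝ) * z ≤ hfun z := le_ciSup (hfun_bdd z) p
  have hp1 := p.2.2
  have hp0 := p.2.1
  nlinarith

lemma hfun_lim (z : ℝ) :
    Tendsto (fun a : ℝ => a⁻¹ * hfun (a * z)) atTop (nhds (max z 0)) := by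
  rcases le_or_gt 0 z with hz | hz
  · have hev : ∀ᶠ a : ℝ in atTop, (fun _ : ℝ => z) a = a⁻¹ * hfun (a * z) := by
      filter_upwards [eventually_ge_atTop (1:ℝ)] with a ha
      have haz : -1 ≤ a * z := by nlinarith
      have ha0 : a ≠ 0 := by linarith
      rw [hfun_eq, hcl, if_pos haz, ← mul_assoc, inv_mul_cancel₀ ha0, one_mul]
    rw [max_eq_left hz]
    exact Tendsto.congr' hev tendsto_const_nhds
  · have hnz : 0 < -z := by linarith
    have hev : ∀ᶠ a : ℝ in atTop,
        (fun a : ℝ => (-1 - Real.log (-z)) * a⁻¹ - Real.log a / a) a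
          = a⁻¹ * hfun (a * z) := by
      filter_upwards [eventually_gt_atTop ((-z)⁻¹ ⊔ 1)] with a ha
      have ha1 : 1 < a := lt_of_le_of_lt le_sup_right ha
      have ha0 : 0 < a := by linarith
      have haz : a * z < -1 := by
        have h1 : (-z)⁻¹ < a := lt_of_le_of_lt le_sup_left ha
        have h2 := mul_lt_mul_of_pos_right h1 hnz
        rw [inv_mul_cancel₀ (ne_of_gt hnz)] at h2
        nlinarith
      rw [hfun_eq, hcl, if_neg (by linarith)]
      have : -(a * z) = a * (-z) := by ring
      rw [this, Real.log_mul (ne_of_gt ha0) (ne_of_gt hnz), div_eq_mul_inv]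
      ring
    have hlim : Tendsto (fun a : ℝ => (-1 - Real.log (-z)) * a⁻¹ - Real.log a / a)
        atTop (nhds 0) := by
      have h1 : Tendsto (fun a : ℝ => (-1 - Real.log (-z)) * a⁻¹) atTop (nhds 0) := by
        simpa using tendsto_inv_atTop_zero.const_mul (-1 - Real.log (-z))
      have h2 : Tendsto (fun a : ℝ => Real.log a / a) atTop (nhds 0) :=
        Real.isLittleO_log_id_atTop.tendsto_div_nhds_zero
      simpa using h1.sub h2
    rw [max_eq_right (le_of_lt hz)]
    exact Tendsto.congr' hev hlim

theorem stmt19 :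
    Monotone TShapley ∧
    (∀ (x : Fin 3 → ℝ) (c : ℝ),
      TShapley (x + c • (1 : Fin 3 → ℝ)) = TShapley x + c • (1 : Fin 3 → ℝ)) ∧
    (∀ x : Fin 3 → ℝ,
      Filter.Tendsto (fun a : ℝ => a⁻¹ • TShapley (a • x)) Filter.atTop (nhds (Trec x))) ∧
    (∀ a : ℝ, 0 ≤ a → Trec ![a, 0, 0] = ![a, 0, 0]) := by
  refine ⟨?_, ?_, ?_, ?_⟩
  · -- Monotone
    intro x y hxy i
    have h0 := hxy 0; have h1 := hxy 1; have h2 := hxy 2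
    fin_cases i
    · show TShapley x 0 ≤ TShapley y 0
      simp only [TShapley, Matrix.cons_val_zero]
      have hm : min (x 1) (x 2) ≤ min (y 1) (y 2) := min_le_min h1 h2
      have A := hfun_lip (min (x 1) (x 2) - y 0) (y 0 - x 0) (by linarith)
      rw [show min (x 1) (x 2) - y 0 + (y 0 - x 0) = min (x 1) (x 2) - x 0 by ring] at A
      have B : hfun (min (x 1) (x 2) - y 0) ≤ hfun (min (y 1) (y 2) - y 0) :=
        hfun_mono (by linarith)
      linarith
    · show TShapley x 1 ≤ TShapley y 1
      simp only [TShapley, Matrix.cons_val_one, Matrix.head_cons, Matrix.cons_val_zero]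
      have A := hfun_lip (x 0 - x 2) (y 0 - x 0) (by linarith)
      rw [show x 0 - x 2 + (y 0 - x 0) = y 0 - x 2 by ring] at A
      have B : hfun (y 0 - y 2) ≤ hfun (y 0 - x 2) := hfun_mono (by linarith)
      linarith
    · show TShapley x 2 ≤ TShapley y 2
      simpa [TShapley] using h2
  · -- additive homogeneity
    intro x c
    funext i
    fin_cases i
    · show TShapley (x + c • 1) 0 = (TShapley x + c • 1) 0
      simp only [TShapley, Matrix.cons_val_zero, Pi.add_apply, Pi.smul_apply, Pi.one_apply,
        smul_eq_mul, mul_one]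
      rw [show min (x 1 + c) (x 2 + c) - (x 0 + c) = min (x 1) (x 2) - x 0 by
        rw [min_add_add_right]; ring]
      ring
    · show TShapley (x + c • 1) 1 = (TShapley x + c • 1) 1
      simp only [TShapley, Matrix.cons_val_one, Matrix.head_cons, Matrix.cons_val_zero, Pi.add_apply, Pi.smul_apply,
        Pi.one_apply, smul_eq_mul, mul_one]
      rw [show x 0 + c - (x 2 + c) = x 0 - x 2 by ring]
      ring
    · show TShapley (x + c • 1) 2 = (TShapley x + c • 1) 2
      simp [TShapley]
  · -- recession limit
    intro x
    rw [tendsto_pi_nhds]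
    intro i
    fin_cases i
    · show Tendsto (fun a : ℝ => (a⁻¹ • TShapley (a • x)) 0) atTop (nhds (Trec x 0))
      simp only [TShapley, Trec, Pi.smul_apply, Matrix.cons_val_zero, smul_eq_mul]
      have hbase : Tendsto (fun a : ℝ => a⁻¹ * hfun (a * (min (x 1) (x 2) - x 0)) + x 0)
          atTop (nhds (max (min (x 1) (x 2) - x 0) 0 + x 0)) :=
        (hfun_lim _).add tendsto_const_nhds
      have heq : max (min (x 1) (x 2) - x 0) 0 + x 0 = max (x 0) (min (x 1) (x 2)) := by
        rw [← max_add_add_right, zero_add, sub_add_cancel, max_comm]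
      rw [heq] at hbase
      refine Tendsto.congr' ?_ hbase
      filter_upwards [eventually_ge_atTop (1:ℝ)] with a ha
      have ha0 : a ≠ 0 := by linarith
      have hmin : min (a * x 1) (a * x 2) = a * min (x 1) (x 2) := by
        rcases le_total (x 1) (x 2) with h | h
        · rw [min_eq_left h, min_eq_left (by nlinarith)]
        · rw [min_eq_right h, min_eq_right (by nlinarith)]
      rw [hmin, show a * min (x 1) (x 2) - a * x 0 = a * (min (x 1) (x 2) - x 0) by ring]
      field_simp
    · show Tendsto (fun a : ℝ => (a⁻¹ • TShapley (a • x)) 1) atTop (nhds (Trec x 1))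
      simp only [TShapley, Trec, Pi.smul_apply, Matrix.cons_val_one, Matrix.head_cons, Matrix.cons_val_zero,
        smul_eq_mul]
      have hbase : Tendsto (fun a : ℝ => -(a⁻¹ * hfun (a * (x 0 - x 2))) + x 0)
          atTop (nhds (-(max (x 0 - x 2) 0) + x 0)) :=
        ((hfun_lim _).neg).add tendsto_const_nhds
      have heq : -(max (x 0 - x 2) 0) + x 0 = min (x 0) (x 2) := by
        rcases le_total (x 0) (x 2) with h | h
        · rw [max_eq_right (by linarith), min_eq_left h]; ring
        · rw [max_eq_left (by linarith), min_eq_right h]; ring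
      rw [heq] at hbase
      refine Tendsto.congr' ?_ hbase
      filter_upwards [eventually_ge_atTop (1:ℝ)] with a ha
      have ha0 : a ≠ 0 := by linarith
      rw [show a * x 0 - a * x 2 = a * (x 0 - x 2) by ring]
      field_simp
    · show Tendsto (fun a : ℝ => (a⁻¹ • TShapley (a • x)) 2) atTop (nhds (Trec x 2))
      simp only [TShapley, Trec, Pi.smul_apply, smul_eq_mul]
      simp only [Matrix.cons_val_two, Matrix.tail_cons, Matrix.head_cons]
      refine Tendsto.congr' ?_ (tendsto_const_nhds (x := x 2))
      filter_upwards [eventually_ge_atTop (1:ℝ)] with a ha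
      have ha0 : a ≠ 0 := by linarith
      field_simp
  · -- fixed points
    intro a ha
    funext i
    fin_cases i
    · show Trec ![a,0,0] 0 = (![a,0,0] : Fin 3 → ℝ) 0
      simp [Trec, max_eq_left ha]
    · show Trec ![a,0,0] 1 = (![a,0,0] : Fin 3 → ℝ) 1
      simp [Trec, min_eq_right ha]
    · show Trec ![a,0,0] 2 = (![a,0,0] : Fin 3 → ℝ) 2
      simp [Trec]
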